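/- If √n σ ≥ S₀ and |θ₀| ≤ Mσ, then there exists L₀ > 0, depending only on S₀, M and τ (for instance L₀ = S₀(τ−M)/2), such that for every ε ∈ ℝ the posterior second moment satisfies n·B_{n,σ,θ₀}(ε) ≤ (C_φ/c_φ) · ( ∫_ℝ v² exp(−v²/2 + εv) dv ) / ( ∫_{−L₀}^{L₀} exp(−v²/2 + εv) dv ). -/

import Mathlib

open MeasureTheory ProbabilityTheory

/-- Denominator integral `D_{n,σ,θ₀}(ε)`. -/
noncomputable def Dint (φ : ℝ → ℝ) (n : ℕ) (σ θ₀ ε : ℝ) : ℝ :=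
  ∫ v : ℝ, Real.exp (-v ^ 2 / 2 + ε * v) *
    ((Real.sqrt n * σ)⁻¹ * φ ((θ₀ + v / Real.sqrt n) / σ))

/-- Numerator integral `N_{n,σ,θ₀}(ε)`. -/
noncomputable def Nint (φ : ℝ → ℝ) (n : ℕ) (σ θ₀ ε : ℝ) : ℝ :=
  ∫ v : ℝ, v ^ 2 * Real.exp (-v ^ 2 / 2 + ε * v) *
    ((Real.sqrt n * σ)⁻¹ * φ ((θ₀ + v / Real.sqrt n) / σ))

/-- Posterior second moment `B_{n,σ,θ₀}(ε) = N/(n·D)`. -/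
noncomputable def Bpost (φ : ℝ → ℝ) (n : ℕ) (σ θ₀ ε : ℝ) : ℝ :=
  Nint φ n σ θ₀ ε / (n * Dint φ n σ θ₀ ε)

lemma exp_shift (ε v : ℝ) :
    Real.exp (ε ^ 2 / 2) * Real.exp (-(1/2) * (v - ε) ^ 2)
      = Real.exp (-v ^ 2 / 2 + ε * v) := by
  rw [← Real.exp_add]; congr 1; ring

lemma integrable_g (ε : ℝ) :
    Integrable (fun v : ℝ => Real.exp (-v ^ 2 / 2 + ε * v)) := by
  have h := (integrable_exp_neg_mul_sq (show (0:ℝ) < 1/2 by norm_num)).comp_sub_right ε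
  have h2 := h.const_mul (Real.exp (ε ^ 2 / 2))
  exact h2.congr (Filter.Eventually.of_forall fun v => exp_shift ε v)

lemma integrable_sq_gauss :
    Integrable (fun u : ℝ => u ^ 2 * Real.exp (-(1/2) * u ^ 2)) := by
  have h := integrable_rpow_mul_exp_neg_mul_sq (show (0:ℝ) < 1/2 by norm_num)
    (show (-1:ℝ) < 2 by norm_num)
  refine h.congr (Filter.Eventually.of_forall fun u => ?_)
  show u ^ (2:ℝ) * Real.exp (-(1/2) * u ^ 2) = u ^ 2 * Real.exp (-(1/2) * u ^ 2)
  rw [show u ^ (2:ℝ) = u ^ 2 from by rw [← Real.rpow_natCast u 2]; norm_num]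

lemma integrable_v2g (ε : ℝ) :
    Integrable (fun v : ℝ => v ^ 2 * Real.exp (-v ^ 2 / 2 + ε * v)) := by
  have h2 := integrable_sq_gauss
  have h1 := integrable_mul_exp_neg_mul_sq (show (0:ℝ) < 1/2 by norm_num)
  have h0 := integrable_exp_neg_mul_sq (show (0:ℝ) < 1/2 by norm_num)
  have hbase : Integrable (fun u : ℝ => (u + ε) ^ 2 * Real.exp (-(1/2) * u ^ 2)) := by
    have := (h2.add ((h1.const_mul (2 * ε)).add (h0.const_mul (ε ^ 2))))
    refine this.congr (Filter.Eventually.of_forall fun u => ?_)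
    simp only [Pi.add_apply]; ring
  have h := (hbase.comp_sub_right ε).const_mul (Real.exp (ε ^ 2 / 2))
  refine h.congr (Filter.Eventually.of_forall fun v => ?_)
  show Real.exp (ε ^ 2 / 2) * ((v - ε + ε) ^ 2 * Real.exp (-(1/2) * (v - ε) ^ 2))
      = v ^ 2 * Real.exp (-v ^ 2 / 2 + ε * v)
  rw [show v - ε + ε = v from by ring]
  calc Real.exp (ε ^ 2 / 2) * (v ^ 2 * Real.exp (-(1/2) * (v - ε) ^ 2))
      = v ^ 2 * (Real.exp (ε ^ 2 / 2) * Real.exp (-(1/2) * (v - ε) ^ 2)) := by ring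
    _ = v ^ 2 * Real.exp (-v ^ 2 / 2 + ε * v) := by rw [exp_shift]

theorem ratio_bound_large_sigma (φ : ℝ → ℝ) (cφ Cφ τ M S₀ : ℝ)
    (hφ_meas : Measurable φ) (hφ_nonneg : ∀ x, 0 ≤ φ x)
    (hφ_prob : (∫ x : ℝ, φ x) = 1)
    (hc : 0 < cφ) (hcC : cφ ≤ Cφ)
    (hub : ∀ x : ℝ, φ x ≤ Cφ)
    (hlb : ∀ x ∈ Set.Ioo (-τ) τ, cφ ≤ φ x)
    (hmom : Integrable (fun x : ℝ => x ^ 2 * φ x))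
    (hM : 0 < M) (hMτ : M < τ) (hS : 0 < S₀) :
    ∃ L₀ : ℝ, 0 < L₀ ∧
      ∀ n : ℕ, 1 ≤ n → ∀ σ : ℝ, 0 < σ → S₀ ≤ Real.sqrt n * σ →
        ∀ θ₀ : ℝ, |θ₀| ≤ M * σ → ∀ ε : ℝ,
          (n : ℝ) * Bpost φ n σ θ₀ ε ≤
            Cφ / cφ * ((∫ v : ℝ, v ^ 2 * Real.exp (-v ^ 2 / 2 + ε * v)) /
              (∫ v in Set.Icc (-L₀) L₀, Real.exp (-v ^ 2 / 2 + ε * v))) := by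
  refine ⟨S₀ * (τ - M) / 2, div_pos (mul_pos hS (by linarith)) two_pos, ?_⟩
  set L₀ := S₀ * (τ - M) / 2 with hL₀
  have hL₀pos : 0 < L₀ := div_pos (mul_pos hS (by linarith)) two_pos
  intro n hn σ hσ hsS θ₀ hθ ε
  set s := Real.sqrt n * σ with hs_def
  have hs0 : 0 < s := lt_of_lt_of_le hS hsS
  have hsqrtn : (1:ℝ) ≤ Real.sqrt n := by
    rw [show (1:ℝ) = Real.sqrt 1 by simp]
    exact Real.sqrt_le_sqrt (by exact_mod_cast hn)
  have hsqrtn0 : 0 < Real.sqrt n := lt_of_lt_of_le one_pos hsqrtn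
  set g := fun v : ℝ => Real.exp (-v ^ 2 / 2 + ε * v) with hg_def
  set w := fun v : ℝ => s⁻¹ * φ ((θ₀ + v / Real.sqrt n) / σ) with hw_def
  have hg_pos : ∀ v, 0 < g v := fun v => Real.exp_pos _
  have hw_nonneg : ∀ v, 0 ≤ w v := fun v => by
    exact mul_nonneg (inv_nonneg.mpr hs0.le) (hφ_nonneg _)
  have hw_le : ∀ v, w v ≤ s⁻¹ * Cφ := fun v =>
    mul_le_mul_of_nonneg_left (hub _) (inv_nonneg.mpr hs0.le)
  have hw_meas : Measurable w := by
    apply Measurable.const_mul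
    exact hφ_meas.comp ((measurable_id.const_add θ₀ |>.comp
      (measurable_id.div_const (Real.sqrt n))).div_const σ |>.comp measurable_id) |>.comp
      measurable_id |>.comp measurable_id
  have hg_int : Integrable g := integrable_g ε
  have hv2g_int : Integrable (fun v => v ^ 2 * g v) := integrable_v2g ε
  have hw_bdd : ∃ C, ∀ v, ‖w v‖ ≤ C := by
    refine ⟨s⁻¹ * Cφ, fun v => ?_⟩
    rw [Real.norm_eq_abs, abs_of_nonneg (hw_nonneg v)]
    exact hw_le v
  have hN_int : Integrable (fun v => v ^ 2 * g v * w v) := by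
    have := (hv2g_int.bdd_mul hw_meas.aestronglyMeasurable (Filter.Eventually.of_forall hw_bdd.choose_spec))
    exact this.congr (Filter.Eventually.of_forall fun v => mul_comm _ _)
  have hD_int : Integrable (fun v => g v * w v) := by
    have := (hg_int.bdd_mul hw_meas.aestronglyMeasurable (Filter.Eventually.of_forall hw_bdd.choose_spec))
    exact this.congr (Filter.Eventually.of_forall fun v => mul_comm _ _)
  set A := ∫ v : ℝ, v ^ 2 * g v with hA_def
  set B := ∫ v in Set.Icc (-L₀) L₀, g v with hB_def
  have hA_nonneg : 0 ≤ A :=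
    integral_nonneg fun v => mul_nonneg (sq_nonneg _) (hg_pos v).le
  -- Numerator bound
  have hN_le : Nint φ n σ θ₀ ε ≤ s⁻¹ * Cφ * A := by
    have h1 : Nint φ n σ θ₀ ε = ∫ v, v ^ 2 * g v * w v := rfl
    rw [h1]
    have h2 : ∫ v, v ^ 2 * g v * w v ≤ ∫ v, v ^ 2 * g v * (s⁻¹ * Cφ) := by
      refine integral_mono hN_int (hv2g_int.mul_const _) fun v => ?_
      exact mul_le_mul_of_nonneg_left (hw_le v)
        (mul_nonneg (sq_nonneg _) (hg_pos v).le)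
    calc (∫ v, v ^ 2 * g v * w v) ≤ ∫ v, v ^ 2 * g v * (s⁻¹ * Cφ) := h2
      _ = A * (s⁻¹ * Cφ) := integral_mul_const _ _
      _ = s⁻¹ * Cφ * A := by ring
  -- Denominator bound
  have harg : ∀ v ∈ Set.Icc (-L₀) L₀, (θ₀ + v / Real.sqrt n) / σ ∈ Set.Ioo (-τ) τ := by
    intro v hv
    have hvabs : |v| ≤ L₀ := abs_le.mpr ⟨hv.1, hv.2⟩
    have habs : |(θ₀ + v / Real.sqrt n) / σ| < τ := by
      rw [abs_div, abs_of_pos hσ]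
      rw [div_lt_iff₀ hσ]
      have h1 : |θ₀ + v / Real.sqrt n| ≤ M * σ + L₀ / Real.sqrt n := by
        refine (abs_add_le _ _).trans (add_le_add hθ ?_)
        rw [abs_div, abs_of_pos hsqrtn0]
        gcongr
      refine h1.trans_lt ?_
      have h2 : L₀ / Real.sqrt n ≤ (τ - M) / 2 * σ := by
        rw [div_le_iff₀ hsqrtn0, hL₀]
        have h3 : S₀ * (τ - M) ≤ Real.sqrt n * σ * (τ - M) := by
          have := mul_le_mul_of_nonneg_right hsS (by linarith : (0:ℝ) ≤ τ - M)
          simpa [hs_def] using this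
        nlinarith [hsqrtn0.le, hσ.le]
      calc M * σ + L₀ / Real.sqrt n ≤ M * σ + (τ - M) / 2 * σ := by linarith
        _ = (M + (τ - M) / 2) * σ := by ring
        _ < τ * σ := by
            refine mul_lt_mul_of_pos_right ?_ hσ
            linarith
    exact ⟨neg_lt_of_abs_lt habs, lt_of_abs_lt habs⟩
  have hB_pos : 0 < B := by
    set m := Real.exp (-(L₀ ^ 2) / 2 - |ε| * L₀) with hm_def
    have hm_pos : 0 < m := Real.exp_pos _
    have hpt : ∀ v ∈ Set.Icc (-L₀) L₀, m ≤ g v := by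
      intro v hv
      have hvabs : |v| ≤ L₀ := abs_le.mpr ⟨hv.1, hv.2⟩
      refine Real.exp_le_exp.mpr ?_
      have h1 : v ^ 2 ≤ L₀ ^ 2 := by
        rw [← sq_abs]; exact pow_le_pow_left₀ (abs_nonneg v) hvabs 2
      have h2 : -(|ε| * L₀) ≤ ε * v := by
        have := neg_abs_le (ε * v)
        have h3 : |ε * v| ≤ |ε| * L₀ := by
          rw [abs_mul]
          exact mul_le_mul_of_nonneg_left hvabs (abs_nonneg ε)
        linarith
      have : -(L₀ ^ 2) / 2 ≤ -v ^ 2 / 2 := by linarith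
      linarith
    have h := setIntegral_ge_of_const_le measurableSet_Icc
      (by
        rw [Real.volume_Icc]
        exact ENNReal.ofReal_ne_top)
      hpt hg_int.integrableOn
    have hmeas : (volume (Set.Icc (-L₀) L₀)).toReal = 2 * L₀ := by
      rw [Real.volume_Icc, ENNReal.toReal_ofReal (by linarith)]
      ring
    rw [smul_eq_mul, mul_comm] at h
    change m * (volume (Set.Icc (-L₀) L₀)).toReal ≤ _ at h
    rw [hmeas] at h
    have : 0 < m * (2 * L₀) := by positivity
    exact lt_of_lt_of_le this h
  have hD_ge : s⁻¹ * cφ * B ≤ Dint φ n σ θ₀ ε := by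
    have h1 : Dint φ n σ θ₀ ε = ∫ v, g v * w v := rfl
    rw [h1]
    have step1 : ∫ v in Set.Icc (-L₀) L₀, g v * w v ≤ ∫ v, g v * w v :=
      setIntegral_le_integral hD_int (Filter.Eventually.of_forall fun v =>
        mul_nonneg (hg_pos v).le (hw_nonneg v))
    have step2 : ∫ v in Set.Icc (-L₀) L₀, g v * (s⁻¹ * cφ)
        ≤ ∫ v in Set.Icc (-L₀) L₀, g v * w v := by
      refine setIntegral_mono_on ((hg_int.mul_const _).integrableOn)
        (hD_int.integrableOn) measurableSet_Icc fun v hv => ?_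
      refine mul_le_mul_of_nonneg_left ?_ (hg_pos v).le
      rw [hw_def]
      exact mul_le_mul_of_nonneg_left (hlb _ (harg v hv)) (inv_nonneg.mpr hs0.le)
    have heq : ∫ v in Set.Icc (-L₀) L₀, g v * (s⁻¹ * cφ) = B * (s⁻¹ * cφ) :=
      integral_mul_const _ _
    calc s⁻¹ * cφ * B = B * (s⁻¹ * cφ) := by ring
      _ = ∫ v in Set.Icc (-L₀) L₀, g v * (s⁻¹ * cφ) := heq.symm
      _ ≤ ∫ v in Set.Icc (-L₀) L₀, g v * w v := step2
      _ ≤ ∫ v, g v * w v := step1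
  have hDlow_pos : 0 < s⁻¹ * cφ * B := by positivity
  -- combine
  have hnB : (n : ℝ) * Bpost φ n σ θ₀ ε = Nint φ n σ θ₀ ε / Dint φ n σ θ₀ ε := by
    have hn0 : (n : ℝ) ≠ 0 := by positivity
    rw [Bpost, mul_div_assoc']
    exact mul_div_mul_left _ _ hn0
  rw [hnB]
  have hmain : Nint φ n σ θ₀ ε / Dint φ n σ θ₀ ε
      ≤ (s⁻¹ * Cφ * A) / (s⁻¹ * cφ * B) :=
    div_le_div₀ (mul_nonneg (mul_nonneg (inv_nonneg.mpr hs0.le) (hc.trans_le hcC).le) hA_nonneg) hN_le hDlow_pos hD_ge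
  refine hmain.trans ?_
  have hs_ne : s⁻¹ ≠ 0 := inv_ne_zero hs0.ne'
  have hB_ne : B ≠ 0 := hB_pos.ne'
  have : (s⁻¹ * Cφ * A) / (s⁻¹ * cφ * B) = Cφ / cφ * (A / B) := by
    field_simp
  rw [this]
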